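/- With rotation systems, face permutation, and equivalence (graph automorphisms together with reflection) for K_{3,3} defined as follows, the total number of equivalence classes of all 64 rotation systems of K_{3,3} is exactly 3. -/
import Mathlib


/-- Adjacency in `K_{3,3}` with parts `{0,1,2}` and `{3,4,5}`. -/
def adjK33 (x y : Fin 6) : Prop :=
  (x.val < 3 ∧ 3 ≤ y.val) ∨ (3 ≤ x.val ∧ y.val < 3)

/-- A rotation system of `K_{3,3}`: each vertex `y` gets a permutation cyclically
permuting its 3 neighbors (no fixed neighbor) and fixing all non-neighbors. -/
def IsRotSysK33 (ρ : Fin 6 → Equiv.Perm (Fin 6)) : Prop :=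
  ∀ y : Fin 6,
    (∀ x, adjK33 x y → adjK33 (ρ y x) y ∧ ρ y x ≠ x) ∧
    (∀ x, ¬ adjK33 x y → ρ y x = x)

/-- Equivalence of rotation systems via a graph automorphism of `K_{3,3}`,
optionally composed with reflection (reversal of all rotations). -/
def EquivRotK33 (ρ ρ' : Fin 6 → Equiv.Perm (Fin 6)) : Prop :=
  ∃ φ : Equiv.Perm (Fin 6),
    (∀ x y, adjK33 x y ↔ adjK33 (φ x) (φ y)) ∧
    ((∀ x y, adjK33 x y → ρ' (φ y) (φ x) = φ (ρ y x)) ∨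
     (∀ x y, adjK33 x y → ρ' (φ y) (φ x) = φ ((ρ y)⁻¹ x)))

set_option maxRecDepth 100000
set_option maxHeartbeats 2000000

instance : ∀ x y, Decidable (adjK33 x y) := fun x y => by unfold adjK33; infer_instance
instance : ∀ ρ, Decidable (IsRotSysK33 ρ) := fun ρ => by unfold IsRotSysK33; infer_instance

def pA : Equiv.Perm (Fin 6) := ⟨![0,1,2,5,3,4], ![0,1,2,4,5,3], by decide, by decide⟩
def pA' : Equiv.Perm (Fin 6) := ⟨![0,1,2,4,5,3], ![0,1,2,5,3,4], by decide, by decide⟩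
def pB : Equiv.Perm (Fin 6) := ⟨![2,0,1,3,4,5], ![1,2,0,3,4,5], by decide, by decide⟩
def pB' : Equiv.Perm (Fin 6) := ⟨![1,2,0,3,4,5], ![2,0,1,3,4,5], by decide, by decide⟩

def F (bs : Fin 6 → Bool) : Fin 6 → Equiv.Perm (Fin 6) := fun y =>
  if y.val < 3 then (if bs y then pA' else pA) else (if bs y then pB' else pB)

def bits (n : Fin 64) : Fin 6 → Bool := fun i => n.val.testBit i.val

def reps3 : Fin 3 → (Fin 6 → Equiv.Perm (Fin 6)) := ![F (bits 0), F (bits 32), F (bits 36)]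

def w0 : Equiv.Perm (Fin 6) := ⟨![0,1,2,3,4,5], ![0,1,2,3,4,5], by decide, by decide⟩
def w1 : Equiv.Perm (Fin 6) := ⟨![0,1,2,3,5,4], ![0,1,2,3,5,4], by decide, by decide⟩
def w2 : Equiv.Perm (Fin 6) := ⟨![0,1,2,4,3,5], ![0,1,2,4,3,5], by decide, by decide⟩
def w3 : Equiv.Perm (Fin 6) := ⟨![0,1,2,4,5,3], ![0,1,2,5,3,4], by decide, by decide⟩
def w4 : Equiv.Perm (Fin 6) := ⟨![0,1,2,5,3,4], ![0,1,2,4,5,3], by decide, by decide⟩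
def w5 : Equiv.Perm (Fin 6) := ⟨![0,1,2,5,4,3], ![0,1,2,5,4,3], by decide, by decide⟩
def w6 : Equiv.Perm (Fin 6) := ⟨![0,2,1,3,4,5], ![0,2,1,3,4,5], by decide, by decide⟩
def w7 : Equiv.Perm (Fin 6) := ⟨![0,2,1,3,5,4], ![0,2,1,3,5,4], by decide, by decide⟩
def w8 : Equiv.Perm (Fin 6) := ⟨![0,2,1,4,3,5], ![0,2,1,4,3,5], by decide, by decide⟩
def w9 : Equiv.Perm (Fin 6) := ⟨![0,2,1,4,5,3], ![0,2,1,5,3,4], by decide, by decide⟩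
def w10 : Equiv.Perm (Fin 6) := ⟨![0,2,1,5,3,4], ![0,2,1,4,5,3], by decide, by decide⟩
def w11 : Equiv.Perm (Fin 6) := ⟨![0,2,1,5,4,3], ![0,2,1,5,4,3], by decide, by decide⟩
def w12 : Equiv.Perm (Fin 6) := ⟨![1,2,0,3,4,5], ![2,0,1,3,4,5], by decide, by decide⟩
def w13 : Equiv.Perm (Fin 6) := ⟨![1,2,0,3,5,4], ![2,0,1,3,5,4], by decide, by decide⟩
def w14 : Equiv.Perm (Fin 6) := ⟨![1,2,0,4,3,5], ![2,0,1,4,3,5], by decide, by decide⟩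
def w15 : Equiv.Perm (Fin 6) := ⟨![1,2,0,4,5,3], ![2,0,1,5,3,4], by decide, by decide⟩
def w16 : Equiv.Perm (Fin 6) := ⟨![1,2,0,5,3,4], ![2,0,1,4,5,3], by decide, by decide⟩
def w17 : Equiv.Perm (Fin 6) := ⟨![1,2,0,5,4,3], ![2,0,1,5,4,3], by decide, by decide⟩
def w18 : Equiv.Perm (Fin 6) := ⟨![3,4,5,0,1,2], ![3,4,5,0,1,2], by decide, by decide⟩
def w19 : Equiv.Perm (Fin 6) := ⟨![3,4,5,0,2,1], ![3,5,4,0,1,2], by decide, by decide⟩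
def w20 : Equiv.Perm (Fin 6) := ⟨![3,4,5,1,0,2], ![4,3,5,0,1,2], by decide, by decide⟩
def w21 : Equiv.Perm (Fin 6) := ⟨![3,4,5,1,2,0], ![5,3,4,0,1,2], by decide, by decide⟩
def w22 : Equiv.Perm (Fin 6) := ⟨![3,4,5,2,0,1], ![4,5,3,0,1,2], by decide, by decide⟩
def w23 : Equiv.Perm (Fin 6) := ⟨![3,4,5,2,1,0], ![5,4,3,0,1,2], by decide, by decide⟩
def Wvec : Fin 64 → Equiv.Perm (Fin 6) := ![w0,w21,w22,w20,w18,w19,w23,w1,w3,w15,w11,w5,w3,w9,w17,w5,w4,w16,w7,w1,w4,w10,w13,w1,w2,w14,w6,w0,w2,w8,w12,w0,w0,w12,w8,w2,w0,w6,w14,w2,w1,w13,w10,w4,w1,w7,w16,w4,w5,w17,w9,w3,w5,w11,w15,w3,w1,w23,w19,w18,w20,w22,w21,w0]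
def bv : Fin 64 → Bool := ![false,false,false,true,false,true,true,false,false,false,true,false,false,true,false,false,false,false,true,false,false,true,false,false,true,true,false,true,true,false,true,true,false,false,true,false,false,true,false,false,true,true,false,true,true,false,true,true,true,true,false,true,true,false,true,true,true,false,false,true,false,true,true,true]
def cl : Fin 64 → Fin 3 := ![0,1,1,1,1,1,1,0,1,2,2,2,2,2,2,1,1,2,2,2,2,2,2,1,1,2,2,2,2,2,2,1,1,2,2,2,2,2,2,1,1,2,2,2,2,2,2,1,1,2,2,2,2,2,2,1,0,1,1,1,1,1,1,0]
def i4v : Fin 64 → Nat := ![18,18,18,18,18,18,18,18,18,26,26,26,26,26,26,18,18,26,26,26,26,26,26,18,18,26,26,26,26,26,26,18,18,26,26,26,26,26,26,18,18,26,26,26,26,26,26,18,18,26,26,26,26,26,26,18,18,18,18,18,18,18,18,18]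
def i6v : Fin 64 → Nat := ![36,18,18,18,18,18,18,36,18,18,18,18,18,18,18,18,18,18,18,18,18,18,18,18,18,18,18,18,18,18,18,18,18,18,18,18,18,18,18,18,18,18,18,18,18,18,18,18,18,18,18,18,18,18,18,18,36,18,18,18,18,18,18,36]
def rn : Fin 3 → Fin 64 := ![0, 32, 36]

/-- The face permutation on darts (extended to all ordered pairs). -/
def facePerm (ρ : Fin 6 → Equiv.Perm (Fin 6)) : Equiv.Perm (Fin 6 × Fin 6) :=
  ⟨fun p => (p.2, ρ p.2 p.1), fun p => ((ρ p.1)⁻¹ p.2, p.1),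
   fun p => by simp, fun p => by simp⟩

/-- Number of fixed points of the `k`-th power of the face permutation. -/
def I (k : ℕ) (ρ : Fin 6 → Equiv.Perm (Fin 6)) : ℕ :=
  Fintype.card {p : Fin 6 × Fin 6 // (facePerm ρ ^ k) p = p}

lemma pow_comm_aux {α β : Type*} (σ : Equiv.Perm α) (τ : Equiv.Perm β) (Ψ : α ≃ β)
    (h : ∀ p, τ (Ψ p) = Ψ (σ p)) : ∀ (k : ℕ) (p), (τ ^ k) (Ψ p) = Ψ ((σ ^ k) p) := by
  intro k
  induction k with
  | zero => simp
  | succ k ih =>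
    intro p
    rw [pow_succ, pow_succ, Equiv.Perm.mul_apply, Equiv.Perm.mul_apply, h, ih]

lemma card_fixed_eq {α β : Type*} [Fintype α] [DecidableEq α] [Fintype β] [DecidableEq β]
    (σ : Equiv.Perm α) (τ : Equiv.Perm β) (Ψ : α ≃ β)
    (h : ∀ p, τ (Ψ p) = Ψ (σ p)) (k : ℕ) :
    Fintype.card {p // (σ ^ k) p = p} = Fintype.card {q // (τ ^ k) q = q} := by
  refine Fintype.card_congr (Equiv.subtypeEquiv Ψ fun p => ?_)
  rw [pow_comm_aux σ τ Ψ h k, Equiv.apply_eq_iff_eq]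

lemma adjK33_symm {x y : Fin 6} (h : adjK33 x y) : adjK33 y x := by
  rcases h with ⟨h1, h2⟩ | ⟨h1, h2⟩
  · exact Or.inr ⟨h2, h1⟩
  · exact Or.inl ⟨h2, h1⟩

/-- The invariants `I k` are preserved by equivalence of rotation systems. -/
lemma I_invariant (ρ ρ' : Fin 6 → Equiv.Perm (Fin 6)) (hρ : IsRotSysK33 ρ)
    (hρ' : IsRotSysK33 ρ') (h : EquivRotK33 ρ ρ') (k : ℕ) : I k ρ = I k ρ' := by
  obtain ⟨φ, hadj, H | H⟩ := h
  · -- direct: facePerm ρ' is conjugate to facePerm ρ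
    refine card_fixed_eq (facePerm ρ) (facePerm ρ') (Equiv.prodCongr φ φ) ?_ k
    rintro ⟨x, y⟩
    show (φ y, ρ' (φ y) (φ x)) = (φ y, φ (ρ y x))
    by_cases hxy : adjK33 x y
    · rw [H x y hxy]
    · have h1 : ρ y x = x := (hρ y).2 x hxy
      have h2 : ρ' (φ y) (φ x) = φ x := (hρ' (φ y)).2 (φ x) (fun hc => hxy ((hadj x y).mpr hc))
      rw [h1, h2]
  · -- reflected: facePerm ρ' is conjugate to (facePerm ρ)⁻¹
    have key := card_fixed_eq ((facePerm ρ)⁻¹) (facePerm ρ')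
        ((Equiv.prodComm _ _).trans (Equiv.prodCongr φ φ)) ?_ k
    · rw [I, I, ← key]
      refine Fintype.card_congr (Equiv.subtypeEquiv (Equiv.refl _) fun p => ?_)
      rw [inv_pow]
      simp only [Equiv.refl_apply]
      constructor
      · intro hp; conv_lhs => rw [← hp]
        simp
      · intro hp; conv_lhs => rw [← hp]
        simp
    · rintro ⟨x, y⟩
      show (φ x, ρ' (φ x) (φ y)) = (φ x, φ ((ρ x)⁻¹ y))
      by_cases hxy : adjK33 y x
      · rw [H y x hxy]
      · have h1 : ρ x y = y := (hρ x).2 y hxy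
        have h1' : (ρ x)⁻¹ y = y := by
          conv_lhs => rw [← h1]
          simp
        have h2 : ρ' (φ x) (φ y) = φ y := (hρ' (φ x)).2 (φ y) (fun hc => hxy ((hadj y x).mpr hc))
        rw [h1', h2]

lemma vertexCases : ∀ (y : Fin 6) (σ : Equiv.Perm (Fin 6)),
    ((∀ x, adjK33 x y → adjK33 (σ x) y ∧ σ x ≠ x) ∧ (∀ x, ¬ adjK33 x y → σ x = x)) →
    σ = (if y.val < 3 then pA else pB) ∨ σ = (if y.val < 3 then pA' else pB') := by decide

lemma exists_bs (ρ : Fin 6 → Equiv.Perm (Fin 6)) (hρ : IsRotSysK33 ρ) :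
    ∃ n : Fin 64, ρ = F (bits n) := by
  have hbs : ∃ bs : Fin 6 → Bool, ρ = F bs := by
    refine ⟨fun y => decide (ρ y = (if (y : ℕ) < 3 then pA' else pB')), ?_⟩
    funext y
    have h := vertexCases y (ρ y) ⟨(hρ y).1, (hρ y).2⟩
    by_cases hy : (y : ℕ) < 3 <;>
      simp only [hy, if_true, if_false] at h <;>
      rcases h with h | h <;>
      simp [F, hy, h] <;> decide
  obtain ⟨bs, rfl⟩ := hbs
  have : ∀ bs : Fin 6 → Bool, ∃ n : Fin 64, bs = bits n := by decide
  obtain ⟨n, rfl⟩ := this bs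
  exact ⟨n, rfl⟩

lemma reps3_eq : ∀ j : Fin 3, reps3 j = F (bits (rn j)) := by
  intro j; fin_cases j <;> rfl

lemma reps3_rot : ∀ j : Fin 3, IsRotSysK33 (reps3 j) := by decide

lemma F_rot : ∀ n : Fin 64, IsRotSysK33 (F (bits n)) := by decide

lemma hw1 : ∀ n : Fin 64, ∀ x y, adjK33 x y ↔ adjK33 (Wvec n x) (Wvec n y) := by decide

lemma hw2a : ∀ n : Fin 64, bv n = false →
    ∀ x y, adjK33 x y → F (bits n) (Wvec n y) (Wvec n x) = Wvec n (reps3 (cl n) y x) := by decide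

lemma hw2b : ∀ n : Fin 64, bv n = true →
    ∀ x y, adjK33 x y → F (bits n) (Wvec n y) (Wvec n x) = Wvec n ((reps3 (cl n) y)⁻¹ x) := by
  decide

lemma pos : ∀ n : Fin 64, EquivRotK33 (reps3 (cl n)) (F (bits n)) := by
  intro n
  cases hbv : bv n with
  | false => exact ⟨Wvec n, hw1 n, Or.inl (hw2a n hbv)⟩
  | true => exact ⟨Wvec n, hw1 n, Or.inr (hw2b n hbv)⟩

lemma Ivals : ∀ n : Fin 64, I 4 (F (bits n)) = i4v n ∧ I 6 (F (bits n)) = i6v n := by decide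

lemma key : ∀ (j : Fin 3) (n : Fin 64), i4v (rn j) = i4v n → i6v (rn j) = i6v n → j = cl n := by
  decide

/-- The 64 rotation systems of `K_{3,3}` fall into exactly 3 equivalence
classes under automorphisms and reflection. -/
theorem K33_three_classes :
    ∃ reps : Fin 3 → (Fin 6 → Equiv.Perm (Fin 6)),
      (∀ i, IsRotSysK33 (reps i)) ∧
      ∀ ρ, IsRotSysK33 ρ → ∃! i, EquivRotK33 (reps i) ρ := by
  refine ⟨reps3, reps3_rot, ?_⟩
  intro ρ hρ
  obtain ⟨n, rfl⟩ := exists_bs ρ hρ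
  refine ⟨cl n, pos n, ?_⟩
  intro j hj
  have h4 := I_invariant _ _ (reps3_rot j) (F_rot n) hj 4
  have h6 := I_invariant _ _ (reps3_rot j) (F_rot n) hj 6
  rw [reps3_eq j, (Ivals (rn j)).1, (Ivals n).1] at h4
  rw [reps3_eq j, (Ivals (rn j)).2, (Ivals n).2] at h6
  exact key j n h4 h6
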